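/- Let s : L → L' be a strict contraction and S = [[I_{L'}, s],[s*, I_L]] on L' ⊕ L. Then for all ℓ' ∈ L', ℓ ∈ L: ⟨S⁻¹(ℓ' ⊕ ℓ), ℓ' ⊕ ℓ⟩ = ⟨ℓ, ℓ⟩ + ⟨(I_{L'} - ss*)⁻¹(ℓ' - sℓ), ℓ' - sℓ⟩. -/

import Mathlib

open scoped InnerProductSpace

/-- The block operator `S = [[I, s],[s*, I]]` on the Hilbert-space direct sum `L' ⊕ L`,
acting by `S(ℓ' ⊕ ℓ) = (ℓ' + sℓ) ⊕ (s*ℓ' + ℓ)`. -/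
noncomputable def blockOp (L L' : Type*) [NormedAddCommGroup L] [InnerProductSpace ℂ L]
    [CompleteSpace L] [NormedAddCommGroup L'] [InnerProductSpace ℂ L'] [CompleteSpace L']
    (s : L →L[ℂ] L') : WithLp 2 (L' × L) →L[ℂ] WithLp 2 (L' × L) :=
  letI e := WithLp.prodContinuousLinearEquiv 2 ℂ L' L
  (e.symm.toContinuousLinearMap) ∘L
    (((ContinuousLinearMap.fst ℂ L' L + s ∘L ContinuousLinearMap.snd ℂ L' L).prod
      ((ContinuousLinearMap.adjoint s) ∘L ContinuousLinearMap.fst ℂ L' L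
        + ContinuousLinearMap.snd ℂ L' L)) ∘L e.toContinuousLinearMap)

open ContinuousLinearMap in
/-- For a strict contraction `s : L → L'`, the block operator `S = [[I, s],[s*, I]]` is
invertible, `I - ss*` is invertible, and
`⟨S⁻¹(ℓ' ⊕ ℓ), ℓ' ⊕ ℓ⟩ = ⟨ℓ, ℓ⟩ + ⟨(I - ss*)⁻¹(ℓ' - sℓ), ℓ' - sℓ⟩`. -/
theorem blockOp_inv_inner_second
    (L L' : Type*) [NormedAddCommGroup L] [InnerProductSpace ℂ L] [CompleteSpace L]
    [NormedAddCommGroup L'] [InnerProductSpace ℂ L'] [CompleteSpace L']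
    (s : L →L[ℂ] L') (hs : ‖s‖ < 1) :
    IsUnit (blockOp L L' s) ∧ IsUnit (1 - s ∘L ContinuousLinearMap.adjoint s) ∧
      ∀ (ℓ' : L') (ℓ : L),
        ⟪Ring.inverse (blockOp L L' s) ((WithLp.equiv 2 (L' × L)).symm (ℓ', ℓ)),
            (WithLp.equiv 2 (L' × L)).symm (ℓ', ℓ)⟫_ℂ
          = ⟪ℓ, ℓ⟫_ℂ
            + ⟪Ring.inverse (1 - s ∘L ContinuousLinearMap.adjoint s) (ℓ' - s ℓ),
                ℓ' - s ℓ⟫_ℂ := by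
  have hnorm : ‖s ∘L adjoint s‖ < 1 := by
    calc ‖s ∘L adjoint s‖ ≤ ‖s‖ * ‖adjoint s‖ := opNorm_comp_le _ _
    _ = ‖s‖ * ‖s‖ := by rw [LinearIsometryEquiv.norm_map]
    _ < 1 := by nlinarith [norm_nonneg s]
  set A : L' →L[ℂ] L' := 1 - s ∘L adjoint s with hA
  let uA : (L' →L[ℂ] L')ˣ := Units.oneSub _ hnorm
  have huA : (uA : L' →L[ℂ] L') = A := rfl
  set B : L' →L[ℂ] L' := (↑uA⁻¹ : L' →L[ℂ] L') with hB
  have hABf : ∀ x, A (B x) = x := fun x => by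
    have := DFunLike.congr_fun uA.mul_inv x
    simpa [huA, mul_apply] using this
  have hBAf : ∀ x, B (A x) = x := fun x => by
    have := DFunLike.congr_fun uA.inv_mul x
    simpa [huA, mul_apply] using this
  set e : WithLp 2 (L' × L) ≃L[ℂ] L' × L := WithLp.prodContinuousLinearEquiv 2 ℂ L' L with he
  set f : WithLp 2 (L' × L) →L[ℂ] L' := B ∘L ((fst ℂ L' L) - s ∘L (snd ℂ L' L)) ∘L e.toContinuousLinearMap with hf
  set T : WithLp 2 (L' × L) →L[ℂ] WithLp 2 (L' × L) :=
    e.symm.toContinuousLinearMap ∘L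
      (f.prod ((snd ℂ L' L) ∘L e.toContinuousLinearMap - (adjoint s) ∘L f)) with hT
  have hST : blockOp L L' s * T = 1 := by
    ext x
    simp only [blockOp, hT, hf, mul_apply, he, coe_comp', Function.comp_apply, prod_apply,
      ContinuousLinearEquiv.coe_coe, WithLp.prodContinuousLinearEquiv_apply,
      WithLp.prodContinuousLinearEquiv_symm_apply, WithLp.equiv_apply, WithLp.ofLp_fst, WithLp.ofLp_snd,
      WithLp.equiv_symm_apply, WithLp.toLp_fst, WithLp.toLp_snd, sub_apply, add_apply, one_apply,
      ContinuousLinearMap.coe_sub', map_sub, map_add]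
    refine (WithLp.equiv 2 (L' × L)).symm_apply_eq.mpr ?_
    have h1 : A (B ((WithLp.equiv 2 (L' × L)) x).1 - B (s ((WithLp.equiv 2 (L' × L)) x).2))
        = ((WithLp.equiv 2 (L' × L)) x).1 - s ((WithLp.equiv 2 (L' × L)) x).2 := by
      rw [← map_sub, hABf]
    simp only [hA, sub_apply, ContinuousLinearMap.one_apply, coe_comp', Function.comp_apply, map_sub, WithLp.equiv_apply, WithLp.ofLp_fst, WithLp.ofLp_snd] at h1
    ext
    · simp
      linear_combination (norm := module) h1
    · simp
  have hTS : T * blockOp L L' s = 1 := by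
    ext x
    simp only [blockOp, hT, hf, mul_apply, he, coe_comp', Function.comp_apply, prod_apply,
      ContinuousLinearEquiv.coe_coe, WithLp.prodContinuousLinearEquiv_apply,
      WithLp.prodContinuousLinearEquiv_symm_apply, WithLp.equiv_apply, WithLp.ofLp_fst, WithLp.ofLp_snd,
      WithLp.equiv_symm_apply, WithLp.toLp_fst, WithLp.toLp_snd, sub_apply, add_apply, one_apply,
      ContinuousLinearMap.coe_sub', map_sub, map_add]
    refine (WithLp.equiv 2 (L' × L)).symm_apply_eq.mpr ?_
    have h2 : B (A x.fst) = x.fst := hBAf x.fst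
    simp only [hA, sub_apply, ContinuousLinearMap.one_apply, coe_comp', Function.comp_apply, map_sub] at h2
    ext
    · simp
      linear_combination (norm := module) h2
    · simp
      have h3 := congrArg (⇑(ContinuousLinearMap.adjoint s)) h2
      simp only [map_sub] at h3
      linear_combination (norm := module) -h3
  refine ⟨⟨⟨blockOp L L' s, T, hST, hTS⟩, rfl⟩, ⟨uA, huA⟩, ?_⟩
  have hRinvS : Ring.inverse (blockOp L L' s) = T := by
    rw [show blockOp L L' s = (⟨blockOp L L' s, T, hST, hTS⟩ : (WithLp 2 (L' × L) →L[ℂ] WithLp 2 (L' × L))ˣ).val from rfl,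
      Ring.inverse_unit]
    rfl
  have hRinvA : Ring.inverse (1 - s ∘L ContinuousLinearMap.adjoint s) = B := by
    rw [show (1 - s ∘L ContinuousLinearMap.adjoint s) = (uA : L' →L[ℂ] L') from rfl,
      Ring.inverse_unit]
  intro ℓ' ℓ
  rw [hRinvS, hRinvA]
  rw [WithLp.prod_inner_apply]
  simp only [hT, hf, he, coe_comp', Function.comp_apply, prod_apply,
    ContinuousLinearEquiv.coe_coe, WithLp.prodContinuousLinearEquiv_apply,
    WithLp.prodContinuousLinearEquiv_symm_apply, WithLp.equiv_apply, WithLp.ofLp_fst, WithLp.ofLp_snd,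
    WithLp.equiv_symm_apply, WithLp.toLp_fst, WithLp.toLp_snd, sub_apply, add_apply, one_apply,
    ContinuousLinearMap.coe_sub', map_sub, map_add]
  simp only [Equiv.apply_symm_apply, WithLp.equiv_symm_apply, WithLp.ofLp_toLp, ContinuousLinearMap.coe_fst', ContinuousLinearMap.coe_snd',
    Pi.sub_apply, Function.comp_apply, map_sub]
  simp only [inner_sub_left, inner_sub_right, ContinuousLinearMap.adjoint_inner_left]
  ring
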